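/- Let m be a nonzero integer, k ≥ 1, and let γ = T^m ∈ SL(2,ℤ). Then the torsion submodule of Q_k(γ) = coker(1 - γ^k) = coker(1 - T^{mk}) is a finite group of cardinality |m|·k, the automorphism g_γ induced by γ acts trivially on it, and consequently c_k(T^m) = |m|·k. -/

import Mathlib

/-- `Q_k(γ) = coker(1 - γ^k)`, the cokernel of `1 - γ^k` acting on `Fin 2 → ℤ`. -/
abbrev Qk (γ : Matrix.SpecialLinearGroup (Fin 2) ℤ) (k : ℕ) :=
  (Fin 2 → ℤ) ⧸ LinearMap.range (Matrix.toLin'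
    (1 - ((γ ^ k : Matrix.SpecialLinearGroup (Fin 2) ℤ) : Matrix (Fin 2) (Fin 2) ℤ)))

/-- The shear matrix `T = [[1,1],[0,1]]` as an element of `SL(2,ℤ)`. -/
def T : Matrix.SpecialLinearGroup (Fin 2) ℤ :=
  ⟨!![1, 1; 0, 1], by norm_num [Matrix.det_fin_two_of]⟩

lemma T_zpow (z : ℤ) :
    ((T ^ z : Matrix.SpecialLinearGroup (Fin 2) ℤ) : Matrix (Fin 2) (Fin 2) ℤ) = !![1, z; 0, 1] := by
  induction z using Int.induction_on with
  | zero => simp [Matrix.one_fin_two]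
  | succ n ih =>
    rw [zpow_add_one, Matrix.SpecialLinearGroup.coe_mul, ih]
    show _ = !![(1:ℤ), (n:ℤ)+1; 0, 1]
    simp [T, Matrix.mul_fin_two]; ring_nf
  | pred n ih =>
    rw [sub_eq_add_neg, zpow_add, Matrix.SpecialLinearGroup.coe_mul, ih]
    have : ((T ^ (-1 : ℤ) : Matrix.SpecialLinearGroup (Fin 2) ℤ) : Matrix (Fin 2) (Fin 2) ℤ) = !![1, -1; 0, 1] := by
      rw [zpow_neg_one, Matrix.SpecialLinearGroup.coe_inv]
      simp [T, Matrix.adjugate_fin_two]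
    rw [this]
    show _ = !![(1:ℤ), -(n:ℤ)-1; 0, 1]
    simp [Matrix.mul_fin_two]; ring_nf

/-- for `γ = T^m` with `m ≠ 0` and `k ≥ 1`, the torsion submodule of
`Q_k(γ)` has cardinality `|m|·k`, the induced endomorphism `g` acts trivially on it,
and hence `c_k(T^m) = |m|·k`. -/
theorem stmt9 (m : ℤ) (hm : m ≠ 0) (k : ℕ) (hk : 1 ≤ k)
    (g : Module.End ℤ (Qk (T ^ m) k))
    (hg : ∀ v : Fin 2 → ℤ, g (Submodule.Quotient.mk v) =
      Submodule.Quotient.mk (Matrix.mulVec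
        (((T ^ m : Matrix.SpecialLinearGroup (Fin 2) ℤ)) : Matrix (Fin 2) (Fin 2) ℤ) v)) :
    Nat.card (Submodule.torsion ℤ (Qk (T ^ m) k)) = m.natAbs * k ∧
    (∀ x ∈ Submodule.torsion ℤ (Qk (T ^ m) k), g x = x) ∧
    Nat.card (Quot fun x y : Submodule.torsion ℤ (Qk (T ^ m) k) =>
        ∃ j : ℕ, (g ^ j) (x : Qk (T ^ m) k) = (y : Qk (T ^ m) k)) = m.natAbs * k := by
  set n : ℤ := m * k with hn_def
  have hk0 : (k : ℤ) ≠ 0 := by exact_mod_cast Nat.one_le_iff_ne_zero.mp hk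
  have hn : n ≠ 0 := mul_ne_zero hm hk0
  set N : ℕ := m.natAbs * k with hN_def
  have hNn : n.natAbs = N := by simp [hn_def, Int.natAbs_mul, hN_def]
  have hN : N ≠ 0 := by rw [← hNn]; exact Int.natAbs_ne_zero.mpr hn
  haveI : NeZero N := ⟨hN⟩
  have hMat : (1 - (((T ^ m) ^ k : Matrix.SpecialLinearGroup (Fin 2) ℤ) : Matrix (Fin 2) (Fin 2) ℤ))
      = !![0, -n; 0, 0] := by
    rw [← zpow_natCast, ← zpow_mul, T_zpow]
    ext i j
    fin_cases i <;> fin_cases j <;> simp [Matrix.one_fin_two, hn_def]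
  have hmem : ∀ w : Fin 2 → ℤ,
      w ∈ LinearMap.range (Matrix.toLin'
        (1 - (((T ^ m) ^ k : Matrix.SpecialLinearGroup (Fin 2) ℤ) : Matrix (Fin 2) (Fin 2) ℤ)))
      ↔ n ∣ w 0 ∧ w 1 = 0 := by
    rw [hMat]
    intro w
    constructor
    · rintro ⟨v, rfl⟩
      simp [Matrix.toLin'_apply, Matrix.mulVec, dotProduct, Fin.sum_univ_two]
    · rintro ⟨⟨t, ht⟩, h1⟩
      refine ⟨![0, -t], ?_⟩
      funext i
      fin_cases i <;>
        simp [Matrix.toLin'_apply, Matrix.mulVec, dotProduct, Fin.sum_univ_two, ht, h1]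
  -- torsion characterization
  have htor : ∀ x : Qk (T ^ m) k, x ∈ Submodule.torsion ℤ (Qk (T ^ m) k) ↔
      ∃ a : ℤ, x = Submodule.Quotient.mk ![a, 0] := by
    intro x
    constructor
    · intro hx
      obtain ⟨v, rfl⟩ := Submodule.Quotient.mk_surjective _ x
      obtain ⟨c, hc⟩ := hx
      rw [← Submodule.Quotient.mk_smul, Submodule.Quotient.mk_eq_zero] at hc
      have h1 : ((c : ℤ) • v) 1 = 0 := ((hmem _).1 hc).2
      have hv1 : v 1 = 0 := by
        have hc0 : (c : ℤ) ≠ 0 := nonZeroDivisors.coe_ne_zero c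
        simpa [Pi.smul_apply, smul_eq_mul, mul_eq_zero, hc0] using h1
      refine ⟨v 0, congrArg _ ?_⟩
      funext i
      fin_cases i <;> simp [hv1]
    · rintro ⟨a, rfl⟩
      refine ⟨⟨n, mem_nonZeroDivisors_of_ne_zero hn⟩, ?_⟩
      show n • (Submodule.Quotient.mk ![a, 0] : Qk (T ^ m) k) = 0
      rw [← Submodule.Quotient.mk_smul, Submodule.Quotient.mk_eq_zero]
      refine (hmem _).2 ⟨⟨a, by simp [mul_comm]⟩, by simp⟩
  -- g acts trivially on torsion
  have h2 : ∀ x ∈ Submodule.torsion ℤ (Qk (T ^ m) k), g x = x := by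
    intro x hx
    obtain ⟨a, rfl⟩ := (htor x).1 hx
    rw [hg]
    congr 1
    funext i
    fin_cases i <;> simp [T_zpow, Matrix.mulVec, dotProduct, Fin.sum_univ_two]
  -- cardinality of torsion
  let F : ZMod N → Submodule.torsion ℤ (Qk (T ^ m) k) := fun a =>
    ⟨Submodule.Quotient.mk ![(a.val : ℤ), 0], (htor _).2 ⟨a.val, rfl⟩⟩
  have hFbij : Function.Bijective F := by
    constructor
    · intro a b hab
      have h := Subtype.ext_iff.mp hab
      rw [Submodule.Quotient.eq] at h
      have hdvd : n ∣ ((a.val : ℤ) - b.val) := by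
        have := ((hmem _).1 h).1
        simpa using this
      have hdvd' : (N : ℤ) ∣ ((a.val : ℤ) - b.val) := by
        have h2 := Int.natAbs_dvd.mpr hdvd
        rwa [hNn] at h2
      have : (((a.val : ℤ) - b.val : ℤ) : ZMod N) = 0 :=
        (ZMod.intCast_zmod_eq_zero_iff_dvd _ N).2 hdvd'
      have : (a.val : ZMod N) = (b.val : ZMod N) := by
        push_cast at this
        exact sub_eq_zero.mp this
      rwa [ZMod.natCast_val, ZMod.natCast_val, ZMod.cast_id, ZMod.cast_id] at this
    · rintro ⟨x, hx⟩
      obtain ⟨a, rfl⟩ := (htor x).1 hx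
      refine ⟨(a : ZMod N), Subtype.ext ?_⟩
      show (Submodule.Quotient.mk _ : Qk (T ^ m) k) = Submodule.Quotient.mk _
      rw [Submodule.Quotient.eq]
      refine (hmem _).2 ⟨?_, by simp⟩
      have hz : (((((a : ZMod N).val : ℤ) - a) : ℤ) : ZMod N) = 0 := by
        push_cast
        rw [ZMod.natCast_val, ZMod.cast_id]
        ring
      have hdvd := (ZMod.intCast_zmod_eq_zero_iff_dvd _ N).1 hz
      have hdvd2 : ((n.natAbs : ℤ)) ∣ (((a : ZMod N).val : ℤ) - a) := by
        rw [hNn]; exact hdvd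
      simp only [Pi.sub_apply, Matrix.cons_val_zero]
      exact Int.natAbs_dvd.mp hdvd2
  have hcard : Nat.card (Submodule.torsion ℤ (Qk (T ^ m) k)) = N := by
    rw [Nat.card_congr (Equiv.ofBijective F hFbij).symm, Nat.card_zmod]
  -- orbit count
  have hrel : ∀ x y : Submodule.torsion ℤ (Qk (T ^ m) k),
      (∃ j : ℕ, (g ^ j) (x : Qk (T ^ m) k) = (y : Qk (T ^ m) k)) ↔ x = y := by
    intro x y
    constructor
    · rintro ⟨j, hj⟩
      have hfix : ∀ j : ℕ, (g ^ j) (x : Qk (T ^ m) k) = (x : Qk (T ^ m) k) := by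
        intro j
        induction j with
        | zero => simp
        | succ j ih =>
          rw [pow_succ', Module.End.mul_apply, ih, h2 _ x.2]
      exact Subtype.ext (by rw [← hj, hfix])
    · rintro rfl; exact ⟨0, by simp⟩
  have e : Quot (fun x y : Submodule.torsion ℤ (Qk (T ^ m) k) =>
      ∃ j : ℕ, (g ^ j) (x : Qk (T ^ m) k) = (y : Qk (T ^ m) k)) ≃
      Submodule.torsion ℤ (Qk (T ^ m) k) :=
    { toFun := Quot.lift id (fun a b h => (hrel a b).1 h)
      invFun := Quot.mk _
      left_inv := by rintro ⟨x⟩; rfl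
      right_inv := fun x => rfl }
  exact ⟨hcard, h2, by rw [Nat.card_congr e, hcard]⟩
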